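/- arXiv:2011.04543 — 2 statements merged into one kernel-verified Lean document; each statement's English description precedes it below -/
import Mathlib

section
/- For any two pseudodifferential operators X and Y over a commutative differential ring, the residue of the commutator [X,Y] lies in the image of the derivation D (i.e., it is a total x-derivative). -/
open scoped BigOperators

namespace Paper

variable {A : Type*} [CommRing A]

/-- Generalized binomial coefficient `C(k,i) = k(k-1)⋯(k-i+1)/i!` for `k : ℤ`. -/
noncomputable def gbinom (k : ℤ) (i : ℕ) : ℤ :=
  (∏ j ∈ Finset.range i, (k - (j : ℤ))) / (i.factorial : ℤ)

/-- Multiplication of pseudodifferential operators, given by their coefficient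
functions `ℤ → A`, with `∂^k f = Σ_{l≥0} C(k,l) D^l(f) ∂^(k-l)`. -/
noncomputable def pmul (D : A → A) (X Y : ℤ → A) : ℤ → A :=
  fun k => ∑ᶠ i : ℤ, ∑ᶠ l : ℕ, X i * (gbinom i l • D^[l] (Y (k + (l : ℤ) - i)))

/-- The residue: the coefficient of `∂⁻¹`. -/
def res (X : ℤ → A) : A := X (-1)

/-- The nonnegative-order (differential-operator) part. -/
def pplus (X : ℤ → A) : ℤ → A := fun i => if 0 ≤ i then X i else 0

/-- The strictly negative-order part. -/
def pminus (X : ℤ → A) : ℤ → A := fun i => if i < 0 then X i else 0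

/-- Boundedness of the order: coefficients vanish above some `M`. -/
def Bdd (X : ℤ → A) : Prop := ∃ M : ℤ, ∀ i : ℤ, M < i → X i = 0

/-- Commutator of pseudodifferential operators. -/
noncomputable def pcomm (D : A → A) (X Y : ℤ → A) : ℤ → A :=
  pmul D X Y - pmul D Y X

/-- The identity operator. -/
def pone : ℤ → A := fun i => if i = 0 then 1 else 0

/-- The single-term operator `s ∂^m`. -/
def psingle (m : ℤ) (s : A) : ℤ → A := fun i => if i = m then s else 0

/-- Powers of a pseudodifferential operator. -/
noncomputable def ppow (D : A → A) (X : ℤ → A) : ℕ → ℤ → A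
  | 0 => pone
  | n + 1 => pmul D X (ppow D X n)

/-- `D` is a derivation: additive and Leibniz. -/
def IsDeriv (D : A → A) : Prop :=
  (∀ a b : A, D (a + b) = D a + D b) ∧ ∀ a b : A, D (a * b) = D a * b + a * D b

/-- Nonnegative part of `L^n`. -/
noncomputable def Lplus (D : A → A) (L : ℤ → A) (n : ℕ) : ℤ → A := pplus (ppow D L n)

/-- Strictly negative part of `L^n`. -/
noncomputable def Lminus (D : A → A) (L : ℤ → A) (n : ℕ) : ℤ → A := pminus (ppow D L n)


/-! ### Auxiliary lemmas -/

lemma aux_asc_prod (m : ℕ) (l : ℕ) :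
    ∏ t ∈ Finset.range l, ((m : ℤ) + t) = (m.ascFactorial l : ℤ) := by
  induction l with
  | zero => simp
  | succ l ih =>
    rw [Finset.prod_range_succ, ih, Nat.ascFactorial_succ]
    push_cast
    ring

lemma aux_factorial_dvd_prod (k : ℤ) (l : ℕ) :
    (l.factorial : ℤ) ∣ ∏ t ∈ Finset.range l, (k - (t : ℤ)) := by
  rcases le_or_gt 0 k with hk | hk
  · lift k to ℕ using hk
    rcases lt_or_ge k l with h | h
    · rw [Finset.prod_eq_zero (Finset.mem_range.2 h) (by ring)]
      exact dvd_zero _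
    · have hcast : ∏ t ∈ Finset.range l, ((k : ℤ) - (t : ℤ))
          = ((k.descFactorial l : ℕ) : ℤ) := by
        rw [Nat.descFactorial_eq_prod_range, Nat.cast_prod]
        refine Finset.prod_congr rfl fun t ht => ?_
        have ht' : t < l := Finset.mem_range.1 ht
        omega
      rw [hcast]
      exact_mod_cast Nat.factorial_dvd_descFactorial k l
  · set m : ℕ := (-k).toNat with hm
    have hmk : (m : ℤ) = -k := Int.toNat_of_nonneg (by omega)
    have h1 : ∏ t ∈ Finset.range l, (k - (t : ℤ))
        = (-1) ^ l * ∏ t ∈ Finset.range l, ((m : ℤ) + t) := by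
      calc ∏ t ∈ Finset.range l, (k - (t : ℤ))
          = ∏ t ∈ Finset.range l, ((-1) * ((m : ℤ) + t)) := by
            refine Finset.prod_congr rfl fun t _ => ?_
            rw [hmk]; ring
        _ = (∏ _t ∈ Finset.range l, (-1 : ℤ)) * ∏ t ∈ Finset.range l, ((m : ℤ) + t) :=
            Finset.prod_mul_distrib
        _ = (-1) ^ l * ∏ t ∈ Finset.range l, ((m : ℤ) + t) := by
            rw [Finset.prod_const, Finset.card_range]
    rw [h1, aux_asc_prod]
    exact Dvd.dvd.mul_left (by exact_mod_cast Nat.factorial_dvd_ascFactorial m l) _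

lemma gbinom_reflect (i : ℤ) (l : ℕ) :
    gbinom (-1 + (l : ℤ) - i) l = (-1) ^ l * gbinom i l := by
  unfold gbinom
  have hprod : ∏ t ∈ Finset.range l, ((-1 + (l : ℤ) - i) - t)
      = (-1) ^ l * ∏ t ∈ Finset.range l, (i - t) := by
    calc ∏ t ∈ Finset.range l, ((-1 + (l : ℤ) - i) - t)
        = ∏ t ∈ Finset.range l, -(i - ((l - 1 - t : ℕ) : ℤ)) := by
          refine Finset.prod_congr rfl fun t ht => ?_
          have ht' : t < l := Finset.mem_range.1 ht
          omega
      _ = ∏ t ∈ Finset.range l, -(i - (t : ℤ)) :=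
          Finset.prod_range_reflect (fun t => -(i - (t : ℤ))) l
      _ = ∏ t ∈ Finset.range l, ((-1) * (i - (t : ℤ))) := by
          refine Finset.prod_congr rfl fun t _ => by ring
      _ = (-1) ^ l * ∏ t ∈ Finset.range l, (i - (t : ℤ)) := by
          rw [Finset.prod_mul_distrib, Finset.prod_const, Finset.card_range]
  rw [hprod, Int.mul_ediv_assoc _ (aux_factorial_dvd_prod i l)]

/-- The range of an additive map is an additive subgroup. -/
def derivRange (D : A → A) (hD : IsDeriv D) : AddSubgroup A where
  carrier := Set.range D
  add_mem' := by
    rintro a b ⟨x, rfl⟩ ⟨y, rfl⟩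
    exact ⟨x + y, hD.1 x y⟩
  zero_mem' := by
    refine ⟨0, ?_⟩
    have h := hD.1 0 0
    rw [add_zero] at h
    exact (left_eq_add.mp h)
  neg_mem' := by
    rintro a ⟨x, rfl⟩
    refine ⟨-x, ?_⟩
    have h := hD.1 x (-x)
    rw [add_neg_cancel] at h
    have h0 : D 0 = 0 := by
      have h' := hD.1 0 0
      rw [add_zero] at h'
      exact (left_eq_add.mp h')
    rw [h0] at h
    linear_combination -h

lemma deriv_zero (D : A → A) (hD : IsDeriv D) : D 0 = 0 := by
  have h := hD.1 0 0
  rw [add_zero] at h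
  exact (left_eq_add.mp h)

/-- Integration by parts. -/
lemma ibp (D : A → A) (hD : IsDeriv D) (l : ℕ) (g : A) :
    ∀ f : A, f * D^[l] g - ((-1 : ℤ) ^ l) • (g * D^[l] f) ∈ derivRange D hD := by
  induction l with
  | zero =>
    intro f
    have : f * D^[0] g - ((-1 : ℤ) ^ 0) • (g * D^[0] f) = 0 := by
      simp [mul_comm]
    rw [this]
    exact (derivRange D hD).zero_mem
  | succ l ih =>
    intro f
    have key : f * D^[l + 1] g - ((-1 : ℤ) ^ (l + 1)) • (g * D^[l + 1] f)
        = D (f * D^[l] g)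
          - (D f * D^[l] g - ((-1 : ℤ) ^ l) • (g * D^[l] (D f))) := by
      rw [Function.iterate_succ_apply' D l g, hD.2 f (D^[l] g),
        Function.iterate_succ_apply D l f]
      simp only [zsmul_eq_mul]
      push_cast
      ring
    rw [key]
    exact AddSubgroup.sub_mem _ ⟨f * D^[l] g, rfl⟩ (ih (D f))

lemma res_pmul_eq (D : A → A) (hD0 : D 0 = 0) (X Y : ℤ → A) (M N : ℤ)
    (hX : ∀ i, M < i → X i = 0) (hY : ∀ i, N < i → Y i = 0) :
    pmul D X Y (-1)
      = ∑ i ∈ Finset.Icc (-1 - max M N) (max M N),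
          ∑ l ∈ Finset.range (M + N + 2).toNat,
            X i * (gbinom i l • D^[l] (Y (-1 + (l : ℤ) - i))) := by
  have hDl : ∀ l : ℕ, D^[l] (0 : A) = 0 := fun l => Function.iterate_fixed hD0 l
  have hR : (M + N + 2 : ℤ) ≤ ((M + N + 2).toNat : ℤ) := Int.self_le_toNat _
  have hinner : ∀ i : ℤ,
      (Function.support fun l : ℕ => X i * (gbinom i l • D^[l] (Y (-1 + (l : ℤ) - i))))
        ⊆ ↑(Finset.range (M + N + 2).toNat) := by
    intro i
    refine Function.support_subset_iff'.2 fun l hl => ?_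
    have hl' : ((M + N + 2).toNat : ℤ) ≤ (l : ℤ) := by
      simp only [Finset.coe_range, Set.mem_Iio, not_lt] at hl
      exact_mod_cast hl
    by_cases hXi : X i = 0
    · simp [hXi]
    · have hiM : i ≤ M := not_lt.1 fun c => hXi (hX i c)
      have : N < -1 + (l : ℤ) - i := by omega
      rw [hY _ this, hDl]
      simp
  have houter :
      (Function.support fun i : ℤ =>
          ∑ᶠ l : ℕ, X i * (gbinom i l • D^[l] (Y (-1 + (l : ℤ) - i))))
        ⊆ ↑(Finset.Icc (-1 - max M N) (max M N)) := by
    refine Function.support_subset_iff'.2 fun i hi => ?_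
    simp only [Finset.coe_Icc, Set.mem_Icc, not_and_or, not_le] at hi
    have hzero : ∀ l : ℕ, X i * (gbinom i l • D^[l] (Y (-1 + (l : ℤ) - i))) = 0 := by
      intro l
      rcases hi with hi | hi
      · have : N < -1 + (l : ℤ) - i := by omega
        rw [hY _ this, hDl]; simp
      · have : M < i := by omega
        rw [hX _ this]; simp
    rw [finsum_congr hzero, finsum_zero]
  show (∑ᶠ i : ℤ, ∑ᶠ l : ℕ, X i * (gbinom i l • D^[l] (Y (-1 + (l : ℤ) - i)))) = _
  rw [finsum_eq_finset_sum_of_support_subset _ houter]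
  exact Finset.sum_congr rfl fun i _ =>
    finsum_eq_finset_sum_of_support_subset _ (hinner i)

/-- For any two pseudodifferential operators `X` and `Y` over a commutative
differential ring, the residue of the commutator `[X,Y]` is a total derivative. -/
theorem stmt4 {A : Type*} [CommRing A] (D : A → A) (hD : IsDeriv D)
    (X Y : ℤ → A) (hX : Bdd X) (hY : Bdd Y) :
    res (pcomm D X Y) ∈ Set.range D := by
  obtain ⟨M, hM⟩ := hX
  obtain ⟨N, hN⟩ := hY
  have hD0 : D 0 = 0 := deriv_zero D hD
  have hDl : ∀ l : ℕ, D^[l] (0 : A) = 0 := fun l => Function.iterate_fixed hD0 l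
  set K : ℤ := max M N with hK
  set R : ℕ := (M + N + 2).toNat with hRdef
  set J : Finset ℤ := Finset.Icc (-1 - K) K with hJ
  have hXY := res_pmul_eq D hD0 X Y M N hM hN
  have hYX := res_pmul_eq D hD0 Y X N M hN hM
  rw [max_comm N M] at hYX
  rw [show N + M + 2 = M + N + 2 by ring] at hYX
  have hres : res (pcomm D X Y) = pmul D X Y (-1) - pmul D Y X (-1) := rfl
  -- reindexing of the second sum
  have key2 : ∀ l : ℕ,
      (∑ i ∈ J, Y i * (gbinom i l • D^[l] (X (-1 + (l : ℤ) - i))))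
        = ∑ i ∈ J, Y (-1 + (l : ℤ) - i) * (gbinom (-1 + (l : ℤ) - i) l • D^[l] (X i)) := by
    intro l
    have hsup1 : (Function.support fun i : ℤ =>
        Y i * (gbinom i l • D^[l] (X (-1 + (l : ℤ) - i)))) ⊆ ↑J := by
      refine Function.support_subset_iff'.2 fun i hi => ?_
      simp only [hJ, Finset.coe_Icc, Set.mem_Icc, not_and_or, not_le] at hi
      rcases hi with hi | hi
      · have : M < -1 + (l : ℤ) - i := by omega
        rw [hM _ this, hDl]; simp
      · have : N < i := by omega
        rw [hN _ this]; simp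
    have hsup2 : (Function.support fun i : ℤ =>
        Y (-1 + (l : ℤ) - i) * (gbinom (-1 + (l : ℤ) - i) l • D^[l] (X i))) ⊆ ↑J := by
      refine Function.support_subset_iff'.2 fun i hi => ?_
      simp only [hJ, Finset.coe_Icc, Set.mem_Icc, not_and_or, not_le] at hi
      rcases hi with hi | hi
      · have : N < -1 + (l : ℤ) - i := by omega
        rw [hN _ this]; simp
      · have : M < i := by omega
        rw [hM _ this, hDl]; simp
    rw [← finsum_eq_finset_sum_of_support_subset _ hsup1,
      ← finsum_eq_finset_sum_of_support_subset _ hsup2]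
    have hbij : Function.Bijective (fun i : ℤ => -1 + (l : ℤ) - i) :=
      Function.Involutive.bijective (fun x => by ring)
    refine (finsum_eq_of_bijective (fun i : ℤ => -1 + (l : ℤ) - i) hbij fun x => ?_).symm
    have hx : -1 + (l : ℤ) - (-1 + (l : ℤ) - x) = x := by ring
    simp only [hx]
  have hYX' : pmul D Y X (-1)
      = ∑ i ∈ J, ∑ l ∈ Finset.range R,
          Y (-1 + (l : ℤ) - i) * (gbinom (-1 + (l : ℤ) - i) l • D^[l] (X i)) := by
    rw [hYX, Finset.sum_comm]
    rw [show (∑ i ∈ J, ∑ l ∈ Finset.range R,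
        Y (-1 + (l : ℤ) - i) * (gbinom (-1 + (l : ℤ) - i) l • D^[l] (X i)))
      = ∑ l ∈ Finset.range R, ∑ i ∈ J,
          Y (-1 + (l : ℤ) - i) * (gbinom (-1 + (l : ℤ) - i) l • D^[l] (X i)) from
      Finset.sum_comm]
    exact Finset.sum_congr rfl fun l _ => key2 l
  suffices h : res (pcomm D X Y) ∈ derivRange D hD from h
  rw [hres, hXY, hYX', ← Finset.sum_sub_distrib]
  refine AddSubgroup.sum_mem _ fun i _ => ?_
  rw [← Finset.sum_sub_distrib]
  refine AddSubgroup.sum_mem _ fun l _ => ?_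
  rw [gbinom_reflect i l]
  have hterm :
      X i * (gbinom i l • D^[l] (Y (-1 + (l : ℤ) - i)))
        - Y (-1 + (l : ℤ) - i) * (((-1) ^ l * gbinom i l) • D^[l] (X i))
      = gbinom i l • (X i * D^[l] (Y (-1 + (l : ℤ) - i))
          - ((-1 : ℤ) ^ l) • (Y (-1 + (l : ℤ) - i) * D^[l] (X i))) := by
    simp only [zsmul_eq_mul]
    push_cast
    ring
  rw [hterm]
  exact AddSubgroup.zsmul_mem _ (ibp D hD l (Y (-1 + (l : ℤ) - i)) (X i)) _


end Paper
end

section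
/- Let L be an invertible element of an associative ring R with splitting R = R_+ ⊕ R_− as for pseudodifferential operators (R_+ a subring, residues of commutators are total derivatives, and res(XY) = 0 whenever both X, Y ∈ R_+). Then for all positive integers i, j, k, the quantity res([L^i_+, L^j_+]·L^k_− + [L^j_+, L^k_+]·L^i_− + [L^k_+, L^i_+]·L^j_−) is a total derivative, i.e., lies in the image of the derivation D; explicitly it equals −2·res(Λ) where Λ = (1/2)([L^i_+ L^j_− − L^j_+ L^i_−, L^k] + [L^k_+ L^i_−, L^j_+] + [L^i_+, L^k_+ L^j_−] + [L^i_−, L^{j+k}] + [L^{i+k}, L^j_−]). -/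
open scoped BigOperators

namespace Paper

variable {A : Type*} [CommRing A]

section Dev

theorem descP_eval (k : ℤ) (n : ℕ) :
    (descPochhammer ℤ n).smeval k = ∏ j ∈ Finset.range n, (k - (j:ℤ)) := by
  induction n with
  | zero => simp [descPochhammer_zero]
  | succ n ih =>
    rw [descPochhammer_succ_right, Polynomial.smeval_mul, ih, Finset.prod_range_succ]
    congr 1
    simp [Polynomial.smeval_sub, Polynomial.smeval_X, Polynomial.smeval_natCast]

theorem gbinom_eq_choose (k : ℤ) (i : ℕ) : gbinom k i = Ring.choose k i := by
  have h := Ring.descPochhammer_eq_factorial_smul_choose (R := ℤ) k i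
  rw [descP_eval] at h
  rw [gbinom, h, nsmul_eq_mul]
  exact Int.mul_ediv_cancel_left _ (by exact_mod_cast i.factorial_ne_zero)

theorem gbinom_zero_right (k : ℤ) : gbinom k 0 = 1 := by simp [gbinom]

theorem gbinom_eq_zero_of_lt {i : ℤ} {l : ℕ} (h0 : 0 ≤ i) (h : i < l) : gbinom i l = 0 := by
  rw [gbinom]
  have : (i - i.toNat) = 0 := by simp [Int.toNat_of_nonneg h0]
  rw [Finset.prod_eq_zero (i := i.toNat) (by simp; omega) this, Int.zero_ediv]

open Finset in
theorem gbinom_vandermonde (a b : ℤ) (k : ℕ) :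
    gbinom (a + b) k = ∑ ij ∈ Finset.HasAntidiagonal.antidiagonal k, gbinom a ij.1 * gbinom b ij.2 := by
  simp only [gbinom_eq_choose]
  exact Ring.add_choose_eq k (Commute.all a b)

theorem gbinom_mul_choose (a : ℤ) {e m : ℕ} (h : e ≤ m) :
    (m.choose e : ℤ) * gbinom a m = gbinom a e * gbinom (a - e) (m - e) := by
  simp only [gbinom_eq_choose]
  have := Ring.choose_smul_choose (R := ℤ) a (n := m) (k := e) h
  rwa [nsmul_eq_mul] at this

theorem gbinom_reflect_s12 {a b : ℤ} {n : ℕ} (h : a + b + 1 = n) :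
    gbinom b n = (-1)^n * gbinom a n := by
  have hd : (n.factorial : ℤ) ∣ ∏ j ∈ Finset.range n, (a - (j:ℤ)) := by
    rw [← descP_eval, Ring.descPochhammer_eq_factorial_smul_choose, nsmul_eq_mul]
    exact Dvd.intro _ rfl
  have hp : ∏ j ∈ Finset.range n, (b - (j:ℤ)) = (-1)^n * ∏ j ∈ Finset.range n, (a - (j:ℤ)) := by
    rw [← Finset.prod_range_reflect (fun j => (a - (j:ℤ))) n]
    have : ∀ j ∈ Finset.range n, (b - (j:ℤ)) = (-1) * (a - ((n - 1 - j : ℕ) : ℤ)) := by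
      intro j hj
      simp only [Finset.mem_range] at hj
      omega
    rw [Finset.prod_congr rfl this, Finset.prod_mul_distrib, Finset.prod_const, Finset.card_range]
  rw [gbinom, gbinom, hp, Int.mul_ediv_assoc _ hd]

namespace IsDeriv

variable {D : A → A} (hD : IsDeriv D)
include hD

noncomputable def hom : A →+ A := AddMonoidHom.mk' D hD.1

theorem hom_apply (a : A) : hD.hom a = D a := rfl

theorem map_zero' : D (0 : A) = 0 := hD.hom.map_zero

theorem map_sum' {ι : Type*} (s : Finset ι) (f : ι → A) :
    D (∑ x ∈ s, f x) = ∑ x ∈ s, D (f x) := map_sum hD.hom f s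

theorem map_zsmul' (n : ℤ) (a : A) : D (n • a) = n • D a := map_zsmul hD.hom n a

theorem iter_hom (l : ℕ) : D^[l] = (⇑hD.hom)^[l] := rfl

theorem iter_zero (l : ℕ) : D^[l] (0 : A) = 0 := by
  rw [hD.iter_hom]; exact iterate_map_zero _ l

theorem iter_add (l : ℕ) (a b : A) : D^[l] (a + b) = D^[l] a + D^[l] b := by
  rw [hD.iter_hom]; exact iterate_map_add _ l a b

theorem iter_zsmul (l : ℕ) (n : ℤ) (a : A) : D^[l] (n • a) = n • D^[l] a := by
  induction l generalizing a with
  | zero => rfl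
  | succ l ih =>
    rw [Function.iterate_succ_apply, Function.iterate_succ_apply, hD.map_zsmul', ih]

theorem iter_sum {ι : Type*} (l : ℕ) (s : Finset ι) (f : ι → A) :
    D^[l] (∑ x ∈ s, f x) = ∑ x ∈ s, D^[l] (f x) := by
  induction l generalizing f with
  | zero => rfl
  | succ l ih =>
    rw [Function.iterate_succ_apply', ih, hD.map_sum']
    simp only [← Function.iterate_succ_apply']

open Finset Nat in
theorem iter_mul (n : ℕ) (a b : A) :
    D^[n] (a * b) = ∑ ij ∈ antidiagonal n, n.choose ij.1 • (D^[ij.1] a * D^[ij.2] b) := by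
  induction n with
  | zero => simp
  | succ n ih =>
    rw [sum_antidiagonal_choose_succ_nsmul (M := A) (fun i j => D^[i] a * D^[j] b) n]
    rw [Function.iterate_succ_apply', ih, hD.map_sum']
    have step : ∀ ij ∈ antidiagonal n, D ((n.choose ij.1) • (D^[ij.1] a * D^[ij.2] b))
        = n.choose ij.1 • (D^[ij.1 + 1] a * D^[ij.2] b)
          + n.choose ij.1 • (D^[ij.1] a * D^[ij.2 + 1] b) := by
      intro ij _
      have : D ((n.choose ij.1) • (D^[ij.1] a * D^[ij.2] b))
          = (n.choose ij.1) • D (D^[ij.1] a * D^[ij.2] b) := by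
        simpa using hD.map_zsmul' (n.choose ij.1) _
      rw [this, hD.2, Function.iterate_succ_apply', Function.iterate_succ_apply', smul_add]
    rw [sum_congr rfl step, sum_add_distrib, add_comm]
    congr 1
    refine sum_congr rfl fun ⟨i, j⟩ hij => ?_
    rw [n.choose_symm_of_eq_add (mem_antidiagonal.1 hij).symm]

open Finset in
theorem iter_mul_range {n N : ℕ} (hn : n < N) (a b : A) :
    D^[n] (a * b) = ∑ e ∈ range N, n.choose e • (D^[e] a * D^[n - e] b) := by
  rw [hD.iter_mul, Finset.Nat.sum_antidiagonal_eq_sum_range_succ_mk]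
  refine Finset.sum_subset (Finset.range_subset_range.2 hn) fun e _ hne => ?_
  rw [Nat.choose_eq_zero_of_lt (by simp at hne; omega), zero_smul]

open Finset in
theorem bilinear_concomitant (n : ℕ) (a b : A) :
    D (∑ m ∈ range n, (-1 : ℤ)^m • (D^[m] a * D^[n - 1 - m] b))
      = a * D^[n] b - (-1 : ℤ)^n • (D^[n] a * b) := by
  rw [hD.map_sum']
  have step : ∀ m ∈ range n, D ((-1 : ℤ)^m • (D^[m] a * D^[n - 1 - m] b))
      = (fun m => (-1 : ℤ)^m • (D^[m] a * D^[n - m] b)) m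
        - (fun m => (-1 : ℤ)^m • (D^[m] a * D^[n - m] b)) (m + 1) := by
    intro m hm
    simp only [mem_range] at hm
    rw [hD.map_zsmul', hD.2, ← Function.iterate_succ_apply' D m a,
        ← Function.iterate_succ_apply' D (n - 1 - m) b]
    simp only [Nat.succ_eq_add_one]
    have h1 : n - 1 - m = n - (m + 1) := by omega
    have h2 : (n - 1 - m) + 1 = n - m := by omega
    rw [smul_add, h2, h1, pow_succ, mul_neg_one, neg_smul, sub_neg_eq_add, add_comm]
  rw [sum_congr rfl step, sum_range_sub']
  simp only [pow_zero, one_smul, Function.iterate_zero_apply, Nat.sub_zero, Nat.sub_self]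

end IsDeriv

/-- sums over two finsets agree if the sets agree on the support -/
theorem sum_eq_sum_iff {α : Type*} {f : α → A} {s t : Finset α}
    (h : ∀ x, f x ≠ 0 → (x ∈ s ↔ x ∈ t)) : ∑ x ∈ s, f x = ∑ x ∈ t, f x := by
  classical
  have h1 : ∑ x ∈ s ∩ t, f x = ∑ x ∈ s, f x := by
    refine Finset.sum_subset (Finset.inter_subset_left) fun x hx hx' => ?_
    by_contra hf
    exact hx' (Finset.mem_inter.2 ⟨hx, (h x hf).1 hx⟩)
  have h2 : ∑ x ∈ s ∩ t, f x = ∑ x ∈ t, f x := by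
    refine Finset.sum_subset (Finset.inter_subset_right) fun x hx hx' => ?_
    by_contra hf
    exact hx' (Finset.mem_inter.2 ⟨(h x hf).2 hx, hx⟩)
  rw [← h1, h2]

theorem sum_box_antidiag {M N K : ℕ} (g : ℕ × ℕ → A)
    (hg : ∀ p, g p ≠ 0 → p.1 + p.2 < K ∧ p.1 < M ∧ p.2 < N) :
    ∑ p ∈ Finset.range M ×ˢ Finset.range N, g p
      = ∑ l ∈ Finset.range K, ∑ p ∈ Finset.HasAntidiagonal.antidiagonal l, g p := by
  classical
  set S := (Finset.range M ×ˢ Finset.range N).filter (fun p => p.1 + p.2 < K) with hS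
  have h1 : ∑ p ∈ Finset.range M ×ˢ Finset.range N, g p = ∑ p ∈ S, g p := by
    refine sum_eq_sum_iff fun p hp => ?_
    obtain ⟨hK, hM, hN⟩ := hg p hp
    simp [hS, Finset.mem_filter, hK]
  have h2 : ∀ l ∈ Finset.range K, ∑ p ∈ Finset.HasAntidiagonal.antidiagonal l, g p
      = ∑ p ∈ S.filter (fun p => p.1 + p.2 = l), g p := by
    intro l hl
    refine sum_eq_sum_iff fun p hp => ?_
    obtain ⟨hK, hM, hN⟩ := hg p hp
    simp only [Finset.HasAntidiagonal.mem_antidiagonal, hS, Finset.mem_filter, Finset.mem_product,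
      Finset.mem_range]
    constructor
    · intro he; exact ⟨⟨⟨hM, hN⟩, hK⟩, he⟩
    · exact fun h => h.2
  rw [h1, Finset.sum_congr rfl h2, Finset.sum_fiberwise_of_maps_to ?_]
  intro p hp
  simp only [hS, Finset.mem_filter] at hp
  exact Finset.mem_range.2 hp.2

namespace PDOaux

/-- The summand of `pmul`. -/
noncomputable def tm (D : A → A) (X Y : ℤ → A) (k : ℤ) (p : ℤ × ℕ) : A :=
  X p.1 * (gbinom p.1 p.2 • D^[p.2] (Y (k + (p.2 : ℤ) - p.1)))

theorem pmul_eq_sum (D : A → A) {X Y : ℤ → A} {k : ℤ} {s : Finset (ℤ × ℕ)}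
    (h : ∀ p, tm D X Y k p ≠ 0 → p ∈ s) :
    pmul D X Y k = ∑ p ∈ s, tm D X Y k p := by
  classical
  have hin : ∀ i : ℤ, ∑ᶠ l : ℕ, tm D X Y k (i, l)
      = ∑ l ∈ s.image Prod.snd, tm D X Y k (i, l) := by
    intro i
    refine finsum_eq_sum_of_support_subset _ fun l hl => ?_
    exact Finset.mem_coe.2 (Finset.mem_image.2 ⟨(i, l), h _ hl, rfl⟩)
  have : pmul D X Y k = ∑ᶠ i : ℤ, ∑ l ∈ s.image Prod.snd, tm D X Y k (i, l) := by
    rw [pmul]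
    exact finsum_congr hin
  rw [this]
  have hout : (Function.support fun i => ∑ l ∈ s.image Prod.snd, tm D X Y k (i, l))
      ⊆ ↑(s.image Prod.fst) := by
    intro i hi
    obtain ⟨l, _, hl⟩ := Finset.exists_ne_zero_of_sum_ne_zero hi
    exact Finset.mem_coe.2 (Finset.mem_image.2 ⟨(i, l), h _ hl, rfl⟩)
  rw [finsum_eq_sum_of_support_subset _ hout, ← Finset.sum_product']
  refine (sum_eq_sum_iff fun p hp => ?_).symm
  constructor
  · intro _; exact Finset.mem_product.2 ⟨Finset.mem_image.2 ⟨p, h p hp, rfl⟩,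
      Finset.mem_image.2 ⟨p, h p hp, rfl⟩⟩
  · intro _; exact h p hp

theorem tm_add_left {X X' Y : ℤ → A} {k : ℤ} {p : ℤ × ℕ} :
    tm D (X + X') Y k p = tm D X Y k p + tm D X' Y k p := by
  simp [tm, add_mul]

theorem tm_add_right (hD : IsDeriv D) {X Y Y' : ℤ → A} {k : ℤ} {p : ℤ × ℕ} :
    tm D X (Y + Y') k p = tm D X Y k p + tm D X Y' k p := by
  simp [tm, hD.iter_add, smul_add, mul_add]

theorem bound_mono {X : ℤ → A} {M M' : ℤ} (h : ∀ i, M < i → X i = 0) (hle : M ≤ M') :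
    ∀ i, M' < i → X i = 0 := fun i hi => h i (by omega)

end PDOaux

end Dev


namespace PDOaux
variable {D : A → A}

theorem tm_zero_left {X Y : ℤ → A} {k : ℤ} {p : ℤ × ℕ} (h : X p.1 = 0) :
    tm D X Y k p = 0 := by simp [tm, h]

theorem tm_zero_gb {X Y : ℤ → A} {k : ℤ} {p : ℤ × ℕ} (h : gbinom p.1 p.2 = 0) :
    tm D X Y k p = 0 := by simp [tm, h]

theorem tm_zero_right (hD : IsDeriv D) {X Y : ℤ → A} {k : ℤ} {p : ℤ × ℕ}
    (h : Y (k + (p.2 : ℤ) - p.1) = 0) : tm D X Y k p = 0 := by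
  simp [tm, h, hD.iter_zero]

theorem tm_ne_zero (hD : IsDeriv D) {X Y : ℤ → A} {k : ℤ} {p : ℤ × ℕ}
    (hp : tm D X Y k p ≠ 0) : X p.1 ≠ 0 ∧ Y (k + (p.2 : ℤ) - p.1) ≠ 0 := by
  constructor
  · intro h; exact hp (tm_zero_left h)
  · intro h; exact hp (tm_zero_right hD h)

/-- canonical index window for the product of operators bounded by `Mx`, `My`. -/
noncomputable def win (Mx My k : ℤ) : Finset (ℤ × ℕ) :=
  Finset.Icc (k - My) Mx ×ˢ Finset.range ((Mx + My + 1 - k).toNat)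

theorem mem_win (hD : IsDeriv D) {X Y : ℤ → A} {Mx My : ℤ}
    (hX : ∀ i, Mx < i → X i = 0) (hY : ∀ i, My < i → Y i = 0) {k : ℤ} {p : ℤ × ℕ}
    (hp : tm D X Y k p ≠ 0) : p ∈ win Mx My k := by
  obtain ⟨h1, h2⟩ := tm_ne_zero hD hp
  have hb1 : p.1 ≤ Mx := by by_contra h; exact h1 (hX _ (by omega))
  have hb2 : k + (p.2 : ℤ) - p.1 ≤ My := by by_contra h; exact h2 (hY _ (by omega))
  have hl : (p.2 : ℤ) < Mx + My + 1 - k := by omega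
  refine Finset.mem_product.2 ⟨Finset.mem_Icc.2 ⟨by omega, hb1⟩, Finset.mem_range.2 ?_⟩
  exact Int.lt_toNat.2 hl

theorem pmul_eq_win (hD : IsDeriv D) {X Y : ℤ → A} {Mx My : ℤ}
    (hX : ∀ i, Mx < i → X i = 0) (hY : ∀ i, My < i → Y i = 0) (k : ℤ) :
    pmul D X Y k = ∑ p ∈ win Mx My k, tm D X Y k p :=
  pmul_eq_sum D fun _ => mem_win hD hX hY

theorem pmul_bound (hD : IsDeriv D) {X Y : ℤ → A} {Mx My : ℤ}
    (hX : ∀ i, Mx < i → X i = 0) (hY : ∀ i, My < i → Y i = 0) :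
    ∀ k, Mx + My < k → pmul D X Y k = 0 := by
  intro k hk
  rw [pmul_eq_sum D (s := ∅) fun p hp => ?_, Finset.sum_empty]
  obtain ⟨h1, h2⟩ := tm_ne_zero hD hp
  have hb1 : p.1 ≤ Mx := by by_contra h; exact h1 (hX _ (by omega))
  have hb2 : k + (p.2 : ℤ) - p.1 ≤ My := by by_contra h; exact h2 (hY _ (by omega))
  exact (by omega : False).elim

theorem pmul_lower (hD : IsDeriv D) {X Y : ℤ → A}
    (hX : ∀ i : ℤ, i < 0 → X i = 0) (hY : ∀ i : ℤ, i < 0 → Y i = 0) :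
    ∀ k : ℤ, k < 0 → pmul D X Y k = 0 := by
  intro k hk
  rw [pmul_eq_sum D (s := ∅) fun p hp => ?_, Finset.sum_empty]
  obtain ⟨h1, h2⟩ := tm_ne_zero hD hp
  have hb1 : 0 ≤ p.1 := by by_contra h; exact h1 (hX _ (by omega))
  have hb2 : 0 ≤ k + (p.2 : ℤ) - p.1 := by by_contra h; exact h2 (hY _ (by omega))
  have : p.1 < (p.2 : ℤ) := by omega
  exact absurd (tm_zero_gb (gbinom_eq_zero_of_lt hb1 this)) hp


open Finset in
theorem collapse (hD : IsDeriv D) {Z : ℤ → A} {Mz : ℤ} (hMz : ∀ i, Mz < i → Z i = 0)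
    (w : A) (a b : ℤ) (e : ℕ) (N : ℕ) (k : ℤ) (hN : Mz + a + b - k < N) :
    ∑ m ∈ range N, ∑ n ∈ range N,
      (gbinom a m * (m.choose e : ℤ) * gbinom b n) •
        (w * D^[m - e + n] (Z (k + (m : ℤ) + n - a - b)))
    = ∑ l ∈ range N,
        (gbinom a e * gbinom (a + b - e) l) • (w * D^[l] (Z (k + (l : ℤ) + e - a - b))) := by
  classical
  rw [← Finset.sum_product']
  set f : ℕ × ℕ → A := fun p =>
    (gbinom a p.1 * (p.1.choose e : ℤ) * gbinom b p.2) •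
      (w * D^[p.1 - e + p.2] (Z (k + (p.1 : ℤ) + p.2 - a - b))) with hf
  have hfz : ∀ p, f p ≠ 0 → e ≤ p.1 ∧ k + (p.1 : ℤ) + p.2 - a - b ≤ Mz := by
    intro p hp
    constructor
    · by_contra h
      exact hp (by simp [hf, Nat.choose_eq_zero_of_lt (by omega : e > p.1)])
    · by_contra h
      have hz : Z (k + (p.1 : ℤ) + p.2 - a - b) = 0 := hMz _ (by omega)
      exact hp (by simp [hf, hz, hD.iter_zero])
  have h1 : ∑ p ∈ range N ×ˢ range N, f p
      = ∑ p ∈ (range N ×ˢ range N).filter (fun p => e ≤ p.1), f p := by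
    refine sum_eq_sum_iff fun p hp => ?_
    simp only [Finset.mem_filter]
    exact ⟨fun h => ⟨h, (hfz p hp).1⟩, fun h => h.1⟩
  have h2 : ∑ p ∈ (range N ×ˢ range N).filter (fun p => e ≤ p.1), f p
      = ∑ q ∈ range (N - e) ×ˢ range N, f (q.1 + e, q.2) := by
    refine Finset.sum_nbij' (fun p => (p.1 - e, p.2)) (fun q => (q.1 + e, q.2)) ?_ ?_ ?_ ?_ ?_
    · intro p hp
      simp only [Finset.mem_filter, Finset.mem_product, Finset.mem_range] at hp ⊢
      omega
    · intro q hq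
      simp only [Finset.mem_filter, Finset.mem_product, Finset.mem_range] at hq ⊢
      omega
    · intro p hp
      simp only [Finset.mem_filter] at hp
      have : p.1 - e + e = p.1 := by omega
      simp [this]
    · intro q hq
      simp
    · intro p hp
      simp only [Finset.mem_filter] at hp
      have : p.1 - e + e = p.1 := by omega
      simp [this]
  rw [h1, h2]
  have h3 : ∀ q ∈ range (N - e) ×ˢ range N, f (q.1 + e, q.2)
      = (gbinom a e * (gbinom (a - e) q.1 * gbinom b q.2)) •
          (w * D^[q.1 + q.2] (Z (k + ((q.1 + q.2 : ℕ) : ℤ) + e - a - b))) := by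
    intro q _
    have h1' : q.1 + e - e + q.2 = q.1 + q.2 := by omega
    have h2' : k + ((q.1 + e : ℕ) : ℤ) + (q.2 : ℤ) - a - b
        = k + ((q.1 + q.2 : ℕ) : ℤ) + (e : ℤ) - a - b := by push_cast; ring
    have hc : gbinom a (q.1 + e) * (((q.1 + e).choose e : ℕ) : ℤ) * gbinom b q.2
        = gbinom a e * (gbinom (a - e) q.1 * gbinom b q.2) := by
      have h3' := gbinom_mul_choose a (e := e) (m := q.1 + e) (by omega)
      rw [Nat.add_sub_cancel] at h3'
      rw [mul_comm (gbinom a (q.1 + e)) (((q.1 + e).choose e : ℕ) : ℤ), h3', mul_assoc]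
    show (gbinom a (q.1 + e) * (((q.1 + e).choose e : ℕ) : ℤ) * gbinom b q.2) •
        (w * D^[q.1 + e - e + q.2] (Z (k + ((q.1 + e : ℕ) : ℤ) + (q.2 : ℤ) - a - b))) = _
    rw [h1', h2', hc]
  rw [Finset.sum_congr rfl h3]
  rw [sum_box_antidiag _ (fun p hp => ?_)]
  · refine Finset.sum_congr rfl fun l hl => ?_
    have hterm : ∀ p ∈ Finset.HasAntidiagonal.antidiagonal l,
        (gbinom a e * (gbinom (a - e) p.1 * gbinom b p.2)) •
          (w * D^[p.1 + p.2] (Z (k + ((p.1 + p.2 : ℕ) : ℤ) + e - a - b)))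
        = (gbinom (a - e) p.1 * gbinom b p.2) •
            (gbinom a e • (w * D^[l] (Z (k + (l : ℤ) + e - a - b)))) := by
      intro p hp
      have hpl : p.1 + p.2 = l := Finset.HasAntidiagonal.mem_antidiagonal.1 hp
      rw [hpl, smul_smul, mul_comm (gbinom a e)]
    rw [Finset.sum_congr rfl hterm, ← Finset.sum_smul, ← gbinom_vandermonde]
    have hab : a - (e : ℤ) + b = a + b - (e : ℤ) := by ring
    rw [smul_smul, hab, mul_comm]
  · have hz : k + ((p.1 + p.2 : ℕ) : ℤ) + e - a - b ≤ Mz := by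
      by_contra h
      have hz0 : Z (k + (((p.1 : ℤ)) + (p.2 : ℤ)) + (e : ℤ) - a - b) = 0 :=
        hMz _ (by push_cast at h ⊢; omega)
      exact hp (by simp [hz0, hD.iter_zero])
    refine ⟨by omega, by omega, by omega⟩


open Finset in
theorem pmul_assoc (hD : IsDeriv D) {X Y Z : ℤ → A} {Mx My Mz : ℤ}
    (hMx : ∀ i, Mx < i → X i = 0) (hMy : ∀ i, My < i → Y i = 0)
    (hMz : ∀ i, Mz < i → Z i = 0) :
    pmul D (pmul D X Y) Z = pmul D X (pmul D Y Z) := by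
  classical
  funext k
  set N : ℕ := (Mx + My + Mz + 1 - k).toNat with hNdef
  set s1 : Finset (ℤ × ℕ) := Finset.Icc (k - Mz) (Mx + My) ×ˢ range N with hs1
  set s2 : Finset (ℤ × ℕ) := Finset.Icc (k - My - Mz) Mx ×ˢ range N with hs2
  set t2 : Finset (ℤ × ℕ) := Finset.Icc (k - Mx - Mz) My ×ˢ range N with ht2
  have hXY : ∀ i, Mx + My < i → pmul D X Y i = 0 := pmul_bound hD hMx hMy
  have hYZ : ∀ i, My + Mz < i → pmul D Y Z i = 0 := pmul_bound hD hMy hMz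
  set NF : ℤ × ℤ × ℕ × ℕ → A := fun u =>
    (gbinom u.1 u.2.2.1 * gbinom (u.1 + u.2.1 - u.2.2.1) u.2.2.2) •
      ((X u.1 * D^[u.2.2.1] (Y u.2.1)) *
        D^[u.2.2.2] (Z (k + (u.2.2.2 : ℤ) + u.2.2.1 - u.1 - u.2.1))) with hNF
  set φ : (ℤ × ℕ) × (ℤ × ℕ) → ℤ × ℤ × ℕ × ℕ := fun r =>
    (r.2.1, r.1.1 + (r.2.2 : ℤ) - r.2.1, r.2.2, r.1.2) with hφ
  -- LHS chain
  have L1 : pmul D (pmul D X Y) Z k = ∑ p ∈ s1, tm D (pmul D X Y) Z k p := by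
    refine pmul_eq_sum D fun p hp => ?_
    obtain ⟨h1, h2⟩ := tm_ne_zero hD hp
    have e1 : p.1 ≤ Mx + My := by by_contra h; exact h1 (hXY _ (by omega))
    have e2 : k + (p.2 : ℤ) - p.1 ≤ Mz := by by_contra h; exact h2 (hMz _ (by omega))
    simp only [hs1, Finset.mem_product, Finset.mem_Icc, Finset.mem_range]
    exact ⟨⟨by omega, e1⟩, Int.lt_toNat.2 (by omega)⟩
  have L2 : ∀ p ∈ s1, tm D (pmul D X Y) Z k p
      = ∑ q ∈ s2, tm D X Y p.1 q * (gbinom p.1 p.2 • D^[p.2] (Z (k + (p.2 : ℤ) - p.1))) := by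
    intro p hps
    have hp1 : k - Mz ≤ p.1 := by
      have := (Finset.mem_Icc.1 (Finset.mem_product.1 hps).1).1
      omega
    have hin : pmul D X Y p.1 = ∑ q ∈ s2, tm D X Y p.1 q := by
      refine pmul_eq_sum D fun q hq => ?_
      obtain ⟨h1, h2⟩ := tm_ne_zero hD hq
      have e1 : q.1 ≤ Mx := by by_contra h; exact h1 (hMx _ (by omega))
      have e2 : p.1 + (q.2 : ℤ) - q.1 ≤ My := by by_contra h; exact h2 (hMy _ (by omega))
      simp only [hs2, Finset.mem_product, Finset.mem_Icc, Finset.mem_range]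
      exact ⟨⟨by omega, e1⟩, Int.lt_toNat.2 (by omega)⟩
    show pmul D X Y p.1 * (gbinom p.1 p.2 • D^[p.2] (Z (k + (p.2 : ℤ) - p.1))) = _
    rw [hin, Finset.sum_mul]
  have hFN : ∀ r : (ℤ × ℕ) × (ℤ × ℕ),
      tm D X Y r.1.1 r.2 * (gbinom r.1.1 r.1.2 • D^[r.1.2] (Z (k + (r.1.2 : ℤ) - r.1.1)))
        = NF (φ r) := by
    intro r
    have e1 : r.2.1 + (r.1.1 + (r.2.2 : ℤ) - r.2.1) - r.2.2 = r.1.1 := by ring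
    have e2 : k + (r.1.2 : ℤ) + (r.2.2 : ℤ) - r.2.1 - (r.1.1 + (r.2.2 : ℤ) - r.2.1)
        = k + (r.1.2 : ℤ) - r.1.1 := by ring
    simp only [hNF, hφ, tm, e1, e2]
    simp [smul_smul, mul_smul_comm, smul_mul_assoc, mul_assoc, mul_comm, mul_left_comm]
  have hinj : ∀ r ∈ s1 ×ˢ s2, ∀ r' ∈ s1 ×ˢ s2, φ r = φ r' → r = r' := by
    intro r _ r' _ h
    simp only [hφ, Prod.mk.injEq] at h
    obtain ⟨h1, h2, h3, h4⟩ := h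
    have h5 : r.1.1 = r'.1.1 := by omega
    exact Prod.ext (Prod.ext h5 h4) (Prod.ext h1 h3)
  have LHS3 : pmul D (pmul D X Y) Z k = ∑ u ∈ (s1 ×ˢ s2).image φ, NF u := by
    rw [L1, Finset.sum_congr rfl L2, ← Finset.sum_product', Finset.sum_image hinj]
    exact Finset.sum_congr rfl fun r _ => hFN r
  -- RHS chain
  have R1 : pmul D X (pmul D Y Z) k = ∑ p ∈ s2, tm D X (pmul D Y Z) k p := by
    refine pmul_eq_sum D fun p hp => ?_
    obtain ⟨h1, h2⟩ := tm_ne_zero hD hp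
    have e1 : p.1 ≤ Mx := by by_contra h; exact h1 (hMx _ (by omega))
    have e2 : k + (p.2 : ℤ) - p.1 ≤ My + Mz := by by_contra h; exact h2 (hYZ _ (by omega))
    simp only [hs2, Finset.mem_product, Finset.mem_Icc, Finset.mem_range]
    exact ⟨⟨by omega, e1⟩, Int.lt_toNat.2 (by omega)⟩
  have R2 : ∀ p ∈ s2, tm D X (pmul D Y Z) k p
      = ∑ q ∈ t2, ∑ e ∈ range N,
          (gbinom p.1 p.2 * (p.2.choose e : ℤ) * gbinom q.1 q.2) •
            ((X p.1 * D^[e] (Y q.1)) *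
              D^[p.2 - e + q.2] (Z (k + (p.2 : ℤ) + q.2 - p.1 - q.1))) := by
    intro p hps
    obtain ⟨hpi, hpr⟩ := Finset.mem_product.1 hps
    have hpa : p.1 ≤ Mx := (Finset.mem_Icc.1 hpi).2
    have hpm : (p.2 : ℤ) < Mx + My + Mz + 1 - k := by
      have := Finset.mem_range.1 hpr
      have := Int.lt_toNat.1 this
      omega
    have hin : pmul D Y Z (k + (p.2 : ℤ) - p.1) = ∑ q ∈ t2, tm D Y Z (k + (p.2 : ℤ) - p.1) q := by
      refine pmul_eq_sum D fun q hq => ?_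
      obtain ⟨h1, h2⟩ := tm_ne_zero hD hq
      have e1 : q.1 ≤ My := by by_contra h; exact h1 (hMy _ (by omega))
      have e2 : (k + (p.2 : ℤ) - p.1) + (q.2 : ℤ) - q.1 ≤ Mz := by
        by_contra h; exact h2 (hMz _ (by omega))
      simp only [ht2, Finset.mem_product, Finset.mem_Icc, Finset.mem_range]
      exact ⟨⟨by omega, e1⟩, Int.lt_toNat.2 (by omega)⟩
    show X p.1 * (gbinom p.1 p.2 • D^[p.2] (pmul D Y Z (k + (p.2 : ℤ) - p.1))) = _
    rw [hin, hD.iter_sum, Finset.smul_sum, Finset.mul_sum]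
    refine Finset.sum_congr rfl fun q hq => ?_
    have hDm : D^[p.2] (tm D Y Z (k + (p.2 : ℤ) - p.1) q)
        = ∑ e ∈ range N, p.2.choose e •
            (D^[e] (Y q.1) * (gbinom q.1 q.2 •
              D^[p.2 - e + q.2] (Z ((k + (p.2 : ℤ) - p.1) + (q.2 : ℤ) - q.1)))) := by
      show D^[p.2] (Y q.1 * (gbinom q.1 q.2 • D^[q.2] (Z _))) = _
      rw [hD.iter_mul_range (by exact Finset.mem_range.1 hpr)]
      refine Finset.sum_congr rfl fun e _ => ?_
      congr 1
      congr 1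
      rw [hD.iter_zsmul]
      congr 1
      exact (Function.iterate_add_apply D (p.2 - e) q.2 _).symm
    rw [hDm, Finset.smul_sum, Finset.mul_sum]
    refine Finset.sum_congr rfl fun e _ => ?_
    have eZ : (k + (p.2 : ℤ) - p.1) + (q.2 : ℤ) - q.1
        = k + (p.2 : ℤ) + (q.2 : ℤ) - p.1 - q.1 := by ring
    rw [eZ]
    simp [smul_smul, mul_smul_comm, smul_mul_assoc, mul_assoc, mul_comm, mul_left_comm]
  have RHS3 : pmul D X (pmul D Y Z) k
      = ∑ a ∈ Finset.Icc (k - My - Mz) Mx, ∑ b ∈ Finset.Icc (k - Mx - Mz) My,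
          ∑ e ∈ range N, ∑ l ∈ range N, NF (a, b, e, l) := by
    rw [R1, Finset.sum_congr rfl R2]
    rw [hs2, Finset.sum_product]
    refine Finset.sum_congr rfl fun a ha => ?_
    -- now: ∑ m ∈ range N, ∑ q ∈ t2, ∑ e ∈ range N, G = ∑ b, ∑ e, ∑ l, NF
    have step1 : ∀ m ∈ range N,
        (∑ q ∈ t2, ∑ e ∈ range N,
          (gbinom a m * (m.choose e : ℤ) * gbinom q.1 q.2) •
            ((X a * D^[e] (Y q.1)) * D^[m - e + q.2] (Z (k + (m : ℤ) + q.2 - a - q.1))))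
        = ∑ b ∈ Finset.Icc (k - Mx - Mz) My, ∑ n ∈ range N, ∑ e ∈ range N,
            (gbinom a m * (m.choose e : ℤ) * gbinom b n) •
              ((X a * D^[e] (Y b)) * D^[m - e + n] (Z (k + (m : ℤ) + n - a - b))) := by
      intro m _
      rw [ht2, Finset.sum_product]
    rw [Finset.sum_congr rfl step1, Finset.sum_comm]
    refine Finset.sum_congr rfl fun b hb => ?_
    -- goal: ∑ m, ∑ n, ∑ e, T = ∑ e, ∑ l, NF
    have swap1 : ∀ m ∈ range N,
        (∑ n ∈ range N, ∑ e ∈ range N,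
          (gbinom a m * (m.choose e : ℤ) * gbinom b n) •
            ((X a * D^[e] (Y b)) * D^[m - e + n] (Z (k + (m : ℤ) + n - a - b))))
        = ∑ e ∈ range N, ∑ n ∈ range N,
            (gbinom a m * (m.choose e : ℤ) * gbinom b n) •
              ((X a * D^[e] (Y b)) * D^[m - e + n] (Z (k + (m : ℤ) + n - a - b))) := by
      intro m _
      exact Finset.sum_comm
    rw [Finset.sum_congr rfl swap1, Finset.sum_comm]
    refine Finset.sum_congr rfl fun e he => ?_
    have ha' : a ≤ Mx := (Finset.mem_Icc.1 ha).2
    have hb' : b ≤ My := (Finset.mem_Icc.1 hb).2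
    have hcoll := collapse (D := D) hD hMz (X a * D^[e] (Y b)) a b e N k
      (by have : Mx + My + Mz + 1 - k ≤ (N : ℤ) := Int.self_le_toNat _; omega)
    rw [hcoll]
  -- combine
  rw [LHS3, RHS3]
  have hbox : ∑ a ∈ Finset.Icc (k - My - Mz) Mx, ∑ b ∈ Finset.Icc (k - Mx - Mz) My,
      ∑ e ∈ range N, ∑ l ∈ range N, NF (a, b, e, l)
      = ∑ u ∈ Finset.Icc (k - My - Mz) Mx ×ˢ
          (Finset.Icc (k - Mx - Mz) My ×ˢ (range N ×ˢ range N)), NF u := by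
    rw [Finset.sum_product]
    refine Finset.sum_congr rfl fun a _ => ?_
    rw [Finset.sum_product]
    refine Finset.sum_congr rfl fun b _ => ?_
    rw [Finset.sum_product]
  rw [hbox]
  refine sum_eq_sum_iff fun u hu => ?_
  -- support facts
  have hXu : X u.1 ≠ 0 := fun h => hu (by simp [hNF, h])
  have hYu : Y u.2.1 ≠ 0 := fun h => hu (by simp [hNF, h, hD.iter_zero])
  have hZu : Z (k + (u.2.2.2 : ℤ) + u.2.2.1 - u.1 - u.2.1) ≠ 0 := fun h =>
    hu (by simp [hNF, h, hD.iter_zero])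
  have hb1 : u.1 ≤ Mx := by by_contra h; exact hXu (hMx _ (by omega))
  have hb2 : u.2.1 ≤ My := by by_contra h; exact hYu (hMy _ (by omega))
  have hb3 : k + (u.2.2.2 : ℤ) + u.2.2.1 - u.1 - u.2.1 ≤ Mz := by
    by_contra h; exact hZu (hMz _ (by omega))
  have hN' : Mx + My + Mz + 1 - k ≤ (N : ℤ) := Int.self_le_toNat _
  constructor
  · intro _
    refine Finset.mem_product.2 ⟨Finset.mem_Icc.2 ⟨by omega, hb1⟩, ?_⟩
    refine Finset.mem_product.2 ⟨Finset.mem_Icc.2 ⟨by omega, hb2⟩, ?_⟩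
    refine Finset.mem_product.2 ⟨Finset.mem_range.2 (Int.lt_toNat.2 (by omega)),
      Finset.mem_range.2 (Int.lt_toNat.2 (by omega))⟩
  · intro _
    refine Finset.mem_image.2 ⟨((u.1 + u.2.1 - u.2.2.1, u.2.2.2), (u.1, u.2.2.1)), ?_, ?_⟩
    · refine Finset.mem_product.2 ⟨?_, ?_⟩
      · simp only [hs1, Finset.mem_product, Finset.mem_Icc, Finset.mem_range]
        exact ⟨⟨by omega, by omega⟩, Int.lt_toNat.2 (by omega)⟩
      · simp only [hs2, Finset.mem_product, Finset.mem_Icc, Finset.mem_range]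
        exact ⟨⟨by omega, hb1⟩, Int.lt_toNat.2 (by omega)⟩
    · simp only [hφ]
      have : u.1 + u.2.1 - (u.2.2.1 : ℤ) + (u.2.2.1 : ℤ) - u.1 = u.2.1 := by ring
      rw [this]

end PDOaux


section BddLemmas
variable {D : A → A}

theorem Bdd.add {X Y : ℤ → A} (hX : Bdd X) (hY : Bdd Y) : Bdd (X + Y) := by
  obtain ⟨M, hM⟩ := hX; obtain ⟨N, hN⟩ := hY
  exact ⟨max M N, fun i hi => by
    simp [Pi.add_apply, hM i (by omega : M < i), hN i (by omega : N < i)]⟩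

theorem Bdd.neg {X : ℤ → A} (hX : Bdd X) : Bdd (-X) := by
  obtain ⟨M, hM⟩ := hX
  exact ⟨M, fun i hi => by simp [hM i hi]⟩

theorem Bdd.zero : Bdd (0 : ℤ → A) := ⟨0, fun _ _ => rfl⟩

theorem Bdd.pone : Bdd (pone : ℤ → A) :=
  ⟨0, fun i hi => by simp [Paper.pone]; omega⟩

theorem Bdd.mul (hD : IsDeriv D) {X Y : ℤ → A} (hX : Bdd X) (hY : Bdd Y) :
    Bdd (pmul D X Y) := by
  obtain ⟨M, hM⟩ := hX; obtain ⟨N, hN⟩ := hY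
  exact ⟨M + N, fun k hk => PDOaux.pmul_bound hD hM hN k hk⟩

theorem Bdd.pplus {X : ℤ → A} (hX : Bdd X) : Bdd (pplus X) := by
  obtain ⟨M, hM⟩ := hX
  exact ⟨M, fun i hi => by
    simp only [Paper.pplus, hM i hi, ite_self]⟩

theorem Bdd.pminus {X : ℤ → A} : Bdd (pminus X) :=
  ⟨-1, fun i hi => by simp only [Paper.pminus]; rw [if_neg (by omega)]⟩

end BddLemmas

/-- Bundled bounded pseudodifferential operators over `(A, D)`. -/
structure PDO (D : A → A) where
  c : ℤ → A
  bdd : Bdd c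

namespace PDO
noncomputable section
set_option linter.unusedSectionVars false
variable {D : A → A} [hF : Fact (IsDeriv D)]

theorem ext' {x y : PDO D} (h : x.c = y.c) : x = y := by
  cases x; cases y; simpa using h

instance : Add (PDO D) := ⟨fun x y => ⟨x.c + y.c, x.bdd.add y.bdd⟩⟩
instance : Neg (PDO D) := ⟨fun x => ⟨-x.c, x.bdd.neg⟩⟩
instance : Zero (PDO D) := ⟨⟨0, Bdd.zero⟩⟩
instance : One (PDO D) := ⟨⟨pone, Bdd.pone⟩⟩
instance : Mul (PDO D) := ⟨fun x y => ⟨pmul D x.c y.c, Bdd.mul hF.out x.bdd y.bdd⟩⟩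

theorem add_c (x y : PDO D) : (x + y).c = x.c + y.c := rfl
theorem mul_c (x y : PDO D) : (x * y).c = pmul D x.c y.c := rfl
theorem one_c : (1 : PDO D).c = pone := rfl
theorem zero_c : (0 : PDO D).c = 0 := rfl
theorem neg_c (x : PDO D) : (-x).c = -x.c := rfl

theorem mul_assoc' (x y z : PDO D) : x * y * z = x * (y * z) := by
  have hD := hF.out
  obtain ⟨Mx, hMx⟩ := x.bdd
  obtain ⟨My, hMy⟩ := y.bdd
  obtain ⟨Mz, hMz⟩ := z.bdd
  exact ext' (PDOaux.pmul_assoc hD hMx hMy hMz)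

theorem one_mul' (x : PDO D) : 1 * x = x := by
  have hD := hF.out
  refine ext' (funext fun k => ?_)
  rw [mul_c, one_c, PDOaux.pmul_eq_sum D (s := {((0 : ℤ), (0 : ℕ))}) (fun p hp => ?_),
    Finset.sum_singleton]
  · simp [PDOaux.tm, Paper.pone, gbinom_zero_right]
  · obtain ⟨i, l⟩ := p
    obtain ⟨h1, _⟩ := PDOaux.tm_ne_zero hD hp
    have hp1 : i = 0 := by
      by_contra h; exact h1 (by simp [Paper.pone, h])
    have hp2 : l = 0 := by
      by_contra h
      refine hp (PDOaux.tm_zero_gb (gbinom_eq_zero_of_lt (by simp [hp1]) ?_))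
      simp only [hp1]; exact_mod_cast Nat.pos_of_ne_zero h
    simp [Prod.ext_iff, hp1, hp2]

theorem mul_one' (x : PDO D) : x * 1 = x := by
  have hD := hF.out
  have hD1 : D 1 = 0 := by
    have := hD.2 1 1
    simp only [one_mul, mul_one] at this
    exact left_eq_add.mp this
  refine ext' (funext fun k => ?_)
  rw [mul_c, one_c, PDOaux.pmul_eq_sum D (s := {(k, (0 : ℕ))}) (fun p hp => ?_),
    Finset.sum_singleton]
  · simp [PDOaux.tm, Paper.pone, gbinom_zero_right]
  · obtain ⟨i, l⟩ := p
    obtain ⟨_, h2⟩ := PDOaux.tm_ne_zero hD hp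
    dsimp only at h2
    have hk : k + (l : ℤ) - i = 0 := by
      by_contra h; exact h2 (by simp only [Paper.pone, if_neg h])
    have hp2 : l = 0 := by
      by_contra h
      obtain ⟨l', rfl⟩ : ∃ l', l = l' + 1 := ⟨l - 1, by omega⟩
      refine hp ?_
      have h1 : Paper.pone (k + ((l' + 1 : ℕ) : ℤ) - i) = (1 : A) := by
        rw [show k + ((l' + 1 : ℕ) : ℤ) - i = 0 from hk]; simp [Paper.pone]
      show PDOaux.tm D x.c Paper.pone k (i, l' + 1) = 0
      unfold PDOaux.tm
      simp only [h1]
      rw [Function.iterate_succ_apply, hD1, hD.iter_zero, smul_zero, mul_zero]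
    have hp1 : i = k := by omega
    simp [Prod.ext_iff, hp1, hp2]

instance ring : Ring (PDO D) where
  add_assoc x y z := ext' (by simp [add_c, add_assoc])
  zero_add x := ext' (by simp [add_c, zero_c])
  add_zero x := ext' (by simp [add_c, zero_c])
  add_comm x y := ext' (by simp [add_c, add_comm])
  neg_add_cancel x := ext' (by simp [add_c, neg_c, zero_c])
  mul_assoc := mul_assoc'
  one_mul := one_mul'
  mul_one := mul_one'
  left_distrib x y z := by
    have hD := hF.out
    refine ext' (funext fun k => ?_)
    obtain ⟨Mx, hMx⟩ := x.bdd
    obtain ⟨My, hMy⟩ := y.bdd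
    obtain ⟨Mz, hMz⟩ := z.bdd
    have hMy' := PDOaux.bound_mono hMy (le_max_left My Mz)
    have hMz' := PDOaux.bound_mono hMz (le_max_right My Mz)
    have hyz : ∀ i, max My Mz < i → (y.c + z.c) i = 0 := fun i hi => by
      simp [Pi.add_apply, hMy' i hi, hMz' i hi]
    show pmul D x.c (y.c + z.c) k = (x * y + x * z).c k
    rw [PDOaux.pmul_eq_win hD hMx hyz k]
    show _ = pmul D x.c y.c k + pmul D x.c z.c k
    rw [PDOaux.pmul_eq_win hD hMx hMy' k, PDOaux.pmul_eq_win hD hMx hMz' k,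
      ← Finset.sum_add_distrib]
    exact Finset.sum_congr rfl fun p _ => PDOaux.tm_add_right hD
  right_distrib x y z := by
    have hD := hF.out
    refine ext' (funext fun k => ?_)
    obtain ⟨Mx, hMx⟩ := x.bdd
    obtain ⟨My, hMy⟩ := y.bdd
    obtain ⟨Mz, hMz⟩ := z.bdd
    have hMx' := PDOaux.bound_mono hMx (le_max_left Mx My)
    have hMy' := PDOaux.bound_mono hMy (le_max_right Mx My)
    have hxy : ∀ i, max Mx My < i → (x.c + y.c) i = 0 := fun i hi => by
      simp [Pi.add_apply, hMx' i hi, hMy' i hi]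
    show pmul D (x.c + y.c) z.c k = (x * z + y * z).c k
    rw [PDOaux.pmul_eq_win hD hxy hMz k]
    show _ = pmul D x.c z.c k + pmul D y.c z.c k
    rw [PDOaux.pmul_eq_win hD hMx' hMz k, PDOaux.pmul_eq_win hD hMy' hMz k,
      ← Finset.sum_add_distrib]
    exact Finset.sum_congr rfl fun p _ => PDOaux.tm_add_left
  zero_mul x := by
    refine ext' (funext fun k => ?_)
    show pmul D 0 x.c k = (0 : ℤ → A) k
    rw [PDOaux.pmul_eq_sum D (s := ∅)
      (fun p hp => absurd (PDOaux.tm_zero_left rfl) hp), Finset.sum_empty]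
    rfl
  mul_zero x := by
    have hD := hF.out
    refine ext' (funext fun k => ?_)
    show pmul D x.c 0 k = (0 : ℤ → A) k
    rw [PDOaux.pmul_eq_sum D (s := ∅)
      (fun p hp => absurd (PDOaux.tm_zero_right hD rfl) hp), Finset.sum_empty]
    rfl
  nsmul := nsmulRec
  zsmul := zsmulRec

-- PDO-level plus/minus/residue machinery
def resP (x : PDO D) : A := x.c (-1)

def Pplus (x : PDO D) : PDO D := ⟨pplus x.c, x.bdd.pplus⟩
def Pminus (x : PDO D) : PDO D := ⟨pminus x.c, Bdd.pminus⟩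

theorem Pplus_c (x : PDO D) : (Pplus x).c = pplus x.c := rfl
theorem Pminus_c (x : PDO D) : (Pminus x).c = pminus x.c := rfl

theorem sub_c (x y : PDO D) : (x - y).c = x.c - y.c := by
  rw [sub_eq_add_neg, add_c, neg_c]
  funext i
  simp [sub_eq_add_neg]

theorem Pplus_add_Pminus (x : PDO D) : Pplus x + Pminus x = x := by
  refine ext' (funext fun i => ?_)
  rw [add_c]
  show pplus x.c i + pminus x.c i = x.c i
  by_cases h : 0 ≤ i
  · simp [Paper.pplus, Paper.pminus, h, not_lt.2 h]
  · simp [Paper.pplus, Paper.pminus, h, lt_of_not_ge h]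

def IsPlus (x : PDO D) : Prop := ∀ i : ℤ, i < 0 → x.c i = 0
def IsMinus (x : PDO D) : Prop := ∀ i : ℤ, -1 < i → x.c i = 0

theorem isPlus_Pplus (x : PDO D) : IsPlus (Pplus x) := by
  intro i hi
  show pplus x.c i = 0
  simp [Paper.pplus, not_le.2 hi]

theorem isMinus_Pminus (x : PDO D) : IsMinus (Pminus x) := by
  intro i hi
  show pminus x.c i = 0
  simp [Paper.pminus]
  omega

theorem IsPlus.mul {x y : PDO D} (hx : IsPlus x) (hy : IsPlus y) : IsPlus (x * y) :=
  fun k hk => PDOaux.pmul_lower hF.out hx hy k hk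

theorem IsPlus.sub {x y : PDO D} (hx : IsPlus x) (hy : IsPlus y) : IsPlus (x - y) := by
  intro i hi
  rw [sub_c]
  show x.c i - y.c i = 0
  rw [hx i hi, hy i hi, sub_zero]

theorem resP_plus_mul {x y : PDO D} (hx : IsPlus x) (hy : IsPlus y) : resP (x * y) = 0 :=
  PDOaux.pmul_lower hF.out hx hy (-1) (by norm_num)

theorem IsMinus.mul {x y : PDO D} (hx : IsMinus x) (hy : IsMinus y) : IsMinus (x * y) :=
  fun k hk => PDOaux.pmul_bound hF.out hx hy k (by omega)

theorem IsMinus.sub {x y : PDO D} (hx : IsMinus x) (hy : IsMinus y) : IsMinus (x - y) := by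
  intro i hi
  rw [sub_c]
  show x.c i - y.c i = 0
  rw [hx i hi, hy i hi, sub_zero]

theorem resP_minus_mul {x y : PDO D} (hx : IsMinus x) (hy : IsMinus y) : resP (x * y) = 0 :=
  PDOaux.pmul_bound hF.out hx hy (-1) (by norm_num)

theorem resP_add (x y : PDO D) : resP (x + y) = resP x + resP y := rfl
theorem resP_neg (x : PDO D) : resP (-x) = -resP x := rfl
theorem resP_sub (x y : PDO D) : resP (x - y) = resP x - resP y := by
  show (x - y).c (-1) = _
  rw [sub_c]
  rfl

open Finset in
theorem resP_comm (x y : PDO D) : resP (x * y - y * x) ∈ Set.range D := by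
  classical
  have hD := hF.out
  obtain ⟨Mx, hMx⟩ := x.bdd
  obtain ⟨My, hMy⟩ := y.bdd
  set ψ : ℤ × ℕ → ℤ × ℕ := fun p => ((p.2 : ℤ) - 1 - p.1, p.2) with hψ
  have hψψ : ∀ p, ψ (ψ p) = p := by
    intro p
    simp only [hψ]
    exact Prod.ext (by dsimp; ring) rfl
  set W := PDOaux.win My Mx (-1) with hW
  set S := PDOaux.win Mx My (-1) ∪ W.image ψ with hS
  have h1 : (x * y).c (-1) = ∑ p ∈ S, PDOaux.tm D x.c y.c (-1) p :=
    PDOaux.pmul_eq_sum D fun p hp =>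
      Finset.mem_union_left _ (PDOaux.mem_win hD hMx hMy hp)
  have hinj : ∀ a ∈ W, ∀ b ∈ W, ψ a = ψ b → a = b := by
    intro a _ b _ h
    have := congrArg ψ h
    rwa [hψψ, hψψ] at this
  have h2 : (y * x).c (-1) = ∑ p ∈ S, PDOaux.tm D y.c x.c (-1) (ψ p) := by
    have e0 : (y * x).c (-1) = ∑ p ∈ W, PDOaux.tm D y.c x.c (-1) p :=
      PDOaux.pmul_eq_sum D fun p hp => PDOaux.mem_win hD hMy hMx hp
    have e1 : ∑ u ∈ W.image ψ, PDOaux.tm D y.c x.c (-1) (ψ u)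
        = ∑ p ∈ W, PDOaux.tm D y.c x.c (-1) p := by
      rw [Finset.sum_image hinj]
      exact Finset.sum_congr rfl fun p _ => by rw [hψψ]
    have e2 : ∑ u ∈ W.image ψ, PDOaux.tm D y.c x.c (-1) (ψ u)
        = ∑ u ∈ S, PDOaux.tm D y.c x.c (-1) (ψ u) := by
      refine sum_eq_sum_iff fun u hu => ?_
      have hm : ψ u ∈ W := PDOaux.mem_win hD hMy hMx hu
      have him : u ∈ W.image ψ := Finset.mem_image.2 ⟨ψ u, hm, hψψ u⟩
      exact ⟨fun _ => Finset.mem_union_right _ him, fun _ => him⟩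
    rw [e0, ← e1, e2]
  have h3 : resP (x * y - y * x)
      = ∑ p ∈ S, (PDOaux.tm D x.c y.c (-1) p - PDOaux.tm D y.c x.c (-1) (ψ p)) := by
    show (x * y - y * x).c (-1) = _
    rw [sub_c]
    show (x * y).c (-1) - (y * x).c (-1) = _
    rw [h1, h2, ← Finset.sum_sub_distrib]
  have hterm : ∀ p ∈ S, PDOaux.tm D x.c y.c (-1) p - PDOaux.tm D y.c x.c (-1) (ψ p)
      = D (gbinom p.1 p.2 • ∑ m ∈ range p.2,
          (-1 : ℤ)^m • (D^[m] (x.c p.1) * D^[p.2 - 1 - m] (y.c (-1 + (p.2 : ℤ) - p.1)))) := by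
    intro p _
    have hrefl : gbinom ((p.2 : ℤ) - 1 - p.1) p.2 = (-1)^p.2 * gbinom p.1 p.2 :=
      gbinom_reflect_s12 (by push_cast; ring)
    have hidx : -1 + (p.2 : ℤ) - ((p.2 : ℤ) - 1 - p.1) = p.1 := by ring
    show x.c p.1 * (gbinom p.1 p.2 • D^[p.2] (y.c (-1 + (p.2 : ℤ) - p.1)))
        - y.c ((p.2 : ℤ) - 1 - p.1) *
          (gbinom ((p.2 : ℤ) - 1 - p.1) p.2 •
            D^[p.2] (x.c (-1 + (p.2 : ℤ) - ((p.2 : ℤ) - 1 - p.1)))) = _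
    rw [hidx, hrefl, hD.map_zsmul', hD.bilinear_concomitant, smul_sub]
    have hb : -1 + (p.2 : ℤ) - p.1 = (p.2 : ℤ) - 1 - p.1 := by ring
    rw [hb]
    simp only [smul_smul, mul_smul_comm, smul_mul_assoc, smul_sub, zsmul_eq_mul]
    push_cast
    ring
  rw [h3, Finset.sum_congr rfl hterm, ← hD.map_sum']
  exact Set.mem_range_self _


theorem cert (P p Q q R r : PDO D)
    (hxy : (P + p) * (Q + q) = (Q + q) * (P + p))
    (hyz : (Q + q) * (R + r) = (R + r) * (Q + q))
    (hzx : (R + r) * (P + p) = (P + p) * (R + r)) :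
    ((P * Q - Q * P) * r + (Q * R - R * Q) * p + (R * P - P * R) * q)
      + ((P * q - Q * p) * (R + r) - (R + r) * (P * q - Q * p)
        + ((R * p) * Q - Q * (R * p))
        + (P * (R * q) - (R * q) * P)
        + (p * ((Q + q) * (R + r)) - ((Q + q) * (R + r)) * p)
        + (((P + p) * (R + r)) * q - q * ((P + p) * (R + r))))
    = -((P * Q - Q * P) * R) - R * (P * Q - Q * P) + r * (p * q - q * p) := by
  have h1 : (P + p) * (Q + q) - (Q + q) * (P + p) = 0 := sub_eq_zero_of_eq hxy
  have h2 : (Q + q) * (R + r) - (R + r) * (Q + q) = 0 := sub_eq_zero_of_eq hyz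
  have h3 : (R + r) * (P + p) - (P + p) * (R + r) = 0 := sub_eq_zero_of_eq hzx
  have key : ((P * Q - Q * P) * r + (Q * R - R * Q) * p + (R * P - P * R) * q)
      + ((P * q - Q * p) * (R + r) - (R + r) * (P * q - Q * p)
        + ((R * p) * Q - Q * (R * p))
        + (P * (R * q) - (R * q) * P)
        + (p * ((Q + q) * (R + r)) - ((Q + q) * (R + r)) * p)
        + (((P + p) * (R + r)) * q - q * ((P + p) * (R + r))))
      = -((P * Q - Q * P) * R) - R * (P * Q - Q * P) + r * (p * q - q * p)
        + (((P + p) * (Q + q) - (Q + q) * (P + p)) * (R + r)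
          + R * ((P + p) * (Q + q) - (Q + q) * (P + p))
          - ((Q + q) * (R + r) - (R + r) * (Q + q)) * p
          - ((R + r) * (P + p) - (P + p) * (R + r)) * q) := by
    noncomm_ring
  rw [key, h1, h2, h3]
  simp

theorem pow_c (L : ℤ → A) (hL : Bdd L) (n : ℕ) :
    ((⟨L, hL⟩ : PDO D) ^ n).c = ppow D L n := by
  induction n with
  | zero => rw [pow_zero]; rfl
  | succ n ih => rw [pow_succ', mul_c, ih]; rfl

end
end PDO

/-- For an invertible pseudodifferential operator `L` and positive `i, j, k`,
`res([L^i₊,L^j₊]L^k₋ + [L^j₊,L^k₊]L^i₋ + [L^k₊,L^i₊]L^j₋)` is a total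
derivative, and equals `-2·res(Λ)` with
`Λ = (1/2)([L^i₊L^j₋ − L^j₊L^i₋, L^k] + [L^k₊L^i₋, L^j₊] + [L^i₊, L^k₊L^j₋]
  + [L^i₋, L^(j+k)] + [L^(i+k), L^j₋])`. -/
theorem stmt12 {A : Type*} [CommRing A] [Algebra ℚ A] (D : A → A) (hD : IsDeriv D)
    (L : ℤ → A) (hL : Bdd L)
    (hinv : ∃ L' : ℤ → A, Bdd L' ∧ pmul D L L' = pone ∧ pmul D L' L = pone)
    (i j k : ℕ) (hi : 0 < i) (hj : 0 < j) (hk : 0 < k) :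
    (res (pmul D (pcomm D (Lplus D L i) (Lplus D L j)) (Lminus D L k)
        + pmul D (pcomm D (Lplus D L j) (Lplus D L k)) (Lminus D L i)
        + pmul D (pcomm D (Lplus D L k) (Lplus D L i)) (Lminus D L j))
      = (-2 : ℚ) • res ((1 / 2 : ℚ) • (
          pcomm D (pmul D (Lplus D L i) (Lminus D L j)
              - pmul D (Lplus D L j) (Lminus D L i)) (ppow D L k)
          + pcomm D (pmul D (Lplus D L k) (Lminus D L i)) (Lplus D L j)
          + pcomm D (Lplus D L i) (pmul D (Lplus D L k) (Lminus D L j))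
          + pcomm D (Lminus D L i) (ppow D L (j + k))
          + pcomm D (ppow D L (i + k)) (Lminus D L j)))) ∧
    res (pmul D (pcomm D (Lplus D L i) (Lplus D L j)) (Lminus D L k)
        + pmul D (pcomm D (Lplus D L j) (Lplus D L k)) (Lminus D L i)
        + pmul D (pcomm D (Lplus D L k) (Lplus D L i)) (Lminus D L j)) ∈ Set.range D := by
  classical
  haveI : Fact (IsDeriv D) := ⟨hD⟩
  have bp : ∀ n : ℕ, Lplus D L n = (PDO.Pplus ((⟨L, hL⟩ : PDO D) ^ n)).c := by
    intro n
    show Lplus D L n = pplus (((⟨L, hL⟩ : PDO D)) ^ n).c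
    rw [PDO.pow_c L hL n]
    rfl
  have bm : ∀ n : ℕ, Lminus D L n = (PDO.Pminus ((⟨L, hL⟩ : PDO D) ^ n)).c := by
    intro n
    show Lminus D L n = pminus (((⟨L, hL⟩ : PDO D)) ^ n).c
    rw [PDO.pow_c L hL n]
    rfl
  have bpow : ∀ n : ℕ, ppow D L n = ((⟨L, hL⟩ : PDO D) ^ n).c := fun n =>
    (PDO.pow_c L hL n).symm
  have bmul : ∀ u v : PDO D, pmul D u.c v.c = (u * v).c := fun _ _ => rfl
  have bcomm : ∀ u v : PDO D, pcomm D u.c v.c = (u * v - v * u).c := by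
    intro u v
    show pmul D u.c v.c - pmul D v.c u.c = _
    rw [bmul, bmul, ← PDO.sub_c]
  have badd : ∀ u v : PDO D, u.c + v.c = (u + v).c := fun _ _ => rfl
  have bsub : ∀ u v : PDO D, u.c - v.c = (u - v).c := fun u v => (PDO.sub_c u v).symm
  have bres : ∀ u : PDO D, res u.c = PDO.resP u := fun _ => rfl
  have bsmul : ∀ (c : ℚ) (f : ℤ → A), res (c • f) = c • res f := fun _ _ => rfl
  simp only [bp, bm, bpow, bmul, bsub, bcomm, badd, bres, bsmul]
  rw [pow_add, pow_add]
  set LP : PDO D := (⟨L, hL⟩ : PDO D) with hLP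
  set P := PDO.Pplus (LP ^ i) with hP
  set p := PDO.Pminus (LP ^ i) with hp
  set Q := PDO.Pplus (LP ^ j) with hQ
  set q := PDO.Pminus (LP ^ j) with hq
  set R := PDO.Pplus (LP ^ k) with hR
  set r := PDO.Pminus (LP ^ k) with hr
  have hx : P + p = LP ^ i := PDO.Pplus_add_Pminus _
  have hy : Q + q = LP ^ j := PDO.Pplus_add_Pminus _
  have hz : R + r = LP ^ k := PDO.Pplus_add_Pminus _
  rw [← hx, ← hy, ← hz]
  have hxy : (P + p) * (Q + q) = (Q + q) * (P + p) := by
    rw [hx, hy]; exact (Commute.refl LP).pow_pow i j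
  have hyz : (Q + q) * (R + r) = (R + r) * (Q + q) := by
    rw [hy, hz]; exact (Commute.refl LP).pow_pow j k
  have hzx : (R + r) * (P + p) = (P + p) * (R + r) := by
    rw [hz, hx]; exact (Commute.refl LP).pow_pow k i
  have hcert := PDO.cert P p Q q R r hxy hyz hzx
  have hpl : PDO.IsPlus (P * Q - Q * P) :=
    ((PDO.isPlus_Pplus _).mul (PDO.isPlus_Pplus _)).sub
      ((PDO.isPlus_Pplus _).mul (PDO.isPlus_Pplus _))
  have hz1 : PDO.resP ((P * Q - Q * P) * R) = 0 :=
    PDO.resP_plus_mul hpl (PDO.isPlus_Pplus _)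
  have hz2 : PDO.resP (R * (P * Q - Q * P)) = 0 :=
    PDO.resP_plus_mul (PDO.isPlus_Pplus _) hpl
  have hz3 : PDO.resP (r * (p * q - q * p)) = 0 :=
    PDO.resP_minus_mul (PDO.isMinus_Pminus _)
      (((PDO.isMinus_Pminus _).mul (PDO.isMinus_Pminus _)).sub
        ((PDO.isMinus_Pminus _).mul (PDO.isMinus_Pminus _)))
  have hsum : PDO.resP ((P * Q - Q * P) * r + (Q * R - R * Q) * p + (R * P - P * R) * q)
      + PDO.resP ((P * q - Q * p) * (R + r) - (R + r) * (P * q - Q * p)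
        + ((R * p) * Q - Q * (R * p))
        + (P * (R * q) - (R * q) * P)
        + (p * ((Q + q) * (R + r)) - ((Q + q) * (R + r)) * p)
        + (((P + p) * (R + r)) * q - q * ((P + p) * (R + r)))) = 0 := by
    rw [← PDO.resP_add, hcert, PDO.resP_add, PDO.resP_sub, PDO.resP_neg, hz1, hz2, hz3]
    ring
  have hmain := eq_neg_of_add_eq_zero_left hsum
  constructor
  · rw [smul_smul, show ((-2 : ℚ) * (1 / 2 : ℚ)) = -1 by norm_num, neg_one_smul]
    exact hmain
  · rw [hmain]
    have radd : ∀ {a b : A}, a ∈ Set.range D → b ∈ Set.range D → a + b ∈ Set.range D := by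
      rintro a b ⟨u, rfl⟩ ⟨v, rfl⟩
      exact ⟨u + v, hD.1 u v⟩
    have rneg : ∀ {a : A}, a ∈ Set.range D → -a ∈ Set.range D := by
      rintro a ⟨u, rfl⟩
      exact ⟨-u, map_neg hD.hom u⟩
    simp only [PDO.resP_add]
    exact rneg (radd (radd (radd (radd (PDO.resP_comm (P * q - Q * p) (R + r))
      (PDO.resP_comm (R * p) Q)) (PDO.resP_comm P (R * q)))
      (PDO.resP_comm p ((Q + q) * (R + r)))) (PDO.resP_comm ((P + p) * (R + r)) q))

end Paper
end
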